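/- Suppose $a_k, b_k$ ($k=1,\dots,m$) are smooth functions of $x$ satisfying the coupled Painlevé IV system $a_k'=-2a_k(\sum_j a_j+b_k-x-c_k)$ and $b_k'=b_k^2+2b_k(\sum_j a_j-x-c_k)+2(\sum_j a_jb_j+n)$, with $a_k$ nowhere zero. Then eliminating $b_k$, each $a_k$ satisfies $a_k''-\frac{(a_k')^2}{2a_k}-4a_k\sum_{j=1}^m a_j\left(\sum_{i=1}^m a_i-x-c_j\right)-2a_k\left(\sum_{j=1}^m a_j-x-c_k\right)^2+2(2n-1)a_k=0$. -/

import Mathlib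

/-- Eliminating `b_k` from the coupled Painlevé IV system yields a
second-order ODE for each `a_k`. -/
theorem coupled_PIV_eliminate_b (m n : ℕ) (c : Fin m → ℝ)
    (a b : Fin m → ℝ → ℝ)
    (hadiff : ∀ k, Differentiable ℝ (a k)) (hbdiff : ∀ k, Differentiable ℝ (b k))
    (hane : ∀ k x, a k x ≠ 0)
    (hsys1 : ∀ k x, deriv (a k) x =
      -2 * a k x * ((∑ j, a j x) + b k x - x - c k))
    (hsys2 : ∀ k x, deriv (b k) x =
      (b k x) ^ 2 + 2 * b k x * ((∑ j, a j x) - x - c k)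
        + 2 * ((∑ j, a j x * b j x) + n)) :
    ∀ k x, deriv (deriv (a k)) x - (deriv (a k) x) ^ 2 / (2 * a k x)
      - 4 * a k x * (∑ j, a j x * ((∑ i, a i x) - x - c j))
      - 2 * a k x * ((∑ j, a j x) - x - c k) ^ 2
      + 2 * (2 * (n : ℝ) - 1) * a k x = 0 := by
  intro k x
  -- abbreviations at the point x
  set S := fun y : ℝ => ∑ j, a j y with hSdef
  have hderiv_ak : deriv (a k) = fun y => -2 * a k y * (S y + b k y - y - c k) := by
    funext y; exact hsys1 k y
  -- derivative facts
  have hAk : HasDerivAt (a k) (deriv (a k) x) x := ((hadiff k) x).hasDerivAt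
  have hBk : HasDerivAt (b k) (deriv (b k) x) x := ((hbdiff k) x).hasDerivAt
  have hS : HasDerivAt S (∑ j, deriv (a j) x) x := by
    apply HasDerivAt.fun_sum
    intro i _
    exact ((hadiff i) x).hasDerivAt
  have h1 : HasDerivAt (fun y => S y + b k y - y - c k)
      ((∑ j, deriv (a j) x) + deriv (b k) x - 1 - 0) x := by
    have := (((hS.add hBk).sub (hasDerivAt_id x)).sub_const (c k))
    simpa using this
  have h2' : HasDerivAt (fun y => -2 * a k y * (S y + b k y - y - c k))
      ((-2 * deriv (a k) x) * (S x + b k x - x - c k)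
        + (-2 * a k x) * ((∑ j, deriv (a j) x) + deriv (b k) x - 1 - 0)) x :=
    (HasDerivAt.const_mul (-2 : ℝ) hAk).mul h1
  have hsecond : deriv (deriv (a k)) x =
      (-2 * deriv (a k) x) * (S x + b k x - x - c k)
        + (-2 * a k x) * ((∑ j, deriv (a j) x) + deriv (b k) x - 1 - 0) := by
    conv_lhs => rw [hderiv_ak]
    exact h2'.deriv
  -- compute the sum of derivatives
  set P := ∑ j, a j x * (S x - x - c j) with hPdef
  set Q := ∑ j, a j x * b j x with hQdef
  have hsumderiv : (∑ j, deriv (a j) x) = -2 * P - 2 * Q := by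
    have : ∀ j : Fin m, deriv (a j) x
        = -2 * (a j x * (S x - x - c j)) + -2 * (a j x * b j x) := by
      intro j; rw [hsys1 j x]; ring
    calc (∑ j, deriv (a j) x)
        = ∑ j, (-2 * (a j x * (S x - x - c j)) + -2 * (a j x * b j x)) :=
          Finset.sum_congr rfl (fun j _ => this j)
      _ = -2 * P - 2 * Q := by
          rw [Finset.sum_add_distrib, ← Finset.mul_sum, ← Finset.mul_sum]; ring
  have hbk' := hsys2 k x
  have hak' := hsys1 k x
  have hne : a k x ≠ 0 := hane k x
  rw [hsecond, hsumderiv, hbk', hak']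
  show -2 * (-2 * a k x * (S x + b k x - x - c k)) * (S x + b k x - x - c k)
      + -2 * a k x * (-2 * P - 2 * Q +
        ((b k x) ^ 2 + 2 * b k x * (S x - x - c k) + 2 * (Q + n)) - 1 - 0)
      - (-2 * a k x * (S x + b k x - x - c k)) ^ 2 / (2 * a k x)
      - 4 * a k x * P - 2 * a k x * (S x - x - c k) ^ 2
      + 2 * (2 * (n : ℝ) - 1) * a k x = 0
  field_simp
  ring
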